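/- The commutator subgroup WB_3' of the welded braid group WB_3 equals the subgroup of WB_3 generated by the 4 elements a_0, f_0, f_1, f_2 (the images in WB_3 of the corresponding elements of VB_3); in particular, WB_3' is finitely generated. -/

import Mathlib

/-!
Common setup: the virtual braid group `VB n` and the welded braid group `WB n`
as presented groups, together with the distinguished elements of their
commutator subgroups used in the paper
"Commutator subgroups of virtual and welded braid groups".

Generators: for `i : Fin (n-1)`, `Sum.inl i` represents σ_{i+1} and
`Sum.inr i` represents ρ_{i+1}.
-/

/-- The generating set of `VB n` (and `WB n`). -/
abbrev VBGen (n : ℕ) := (Fin (n - 1)) ⊕ (Fin (n - 1))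

/-- The free group letter σ_i, for `1 ≤ i ≤ n-1` (junk value `1` otherwise). -/
def fσ (n i : ℕ) : FreeGroup (VBGen n) :=
  if h : 1 ≤ i ∧ i - 1 < n - 1 then FreeGroup.of (Sum.inl ⟨i - 1, h.2⟩) else 1

/-- The free group letter ρ_i, for `1 ≤ i ≤ n-1` (junk value `1` otherwise). -/
def fρ (n i : ℕ) : FreeGroup (VBGen n) :=
  if h : 1 ≤ i ∧ i - 1 < n - 1 then FreeGroup.of (Sum.inr ⟨i - 1, h.2⟩) else 1

/-- The defining relators of the virtual braid group `VB n`. -/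
def vbRels (n : ℕ) : Set (FreeGroup (VBGen n)) :=
  {r | ∃ i j, 1 ≤ i ∧ i + 2 ≤ j ∧ j ≤ n - 1 ∧
      (r = fσ n i * fσ n j * (fσ n i)⁻¹ * (fσ n j)⁻¹ ∨
       r = fρ n i * fρ n j * (fρ n i)⁻¹ * (fρ n j)⁻¹ ∨
       r = fσ n i * fρ n j * (fσ n i)⁻¹ * (fρ n j)⁻¹ ∨
       r = fσ n j * fρ n i * (fσ n j)⁻¹ * (fρ n i)⁻¹)} ∪
  {r | ∃ i, 1 ≤ i ∧ i + 1 ≤ n - 1 ∧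
      (r = fσ n i * fσ n (i+1) * fσ n i * (fσ n (i+1))⁻¹ * (fσ n i)⁻¹ * (fσ n (i+1))⁻¹ ∨
       r = fρ n i * fρ n (i+1) * fρ n i * (fρ n (i+1))⁻¹ * (fρ n i)⁻¹ * (fρ n (i+1))⁻¹ ∨
       r = fρ n i * fρ n (i+1) * fσ n i * (fρ n (i+1))⁻¹ * (fρ n i)⁻¹ * (fσ n (i+1))⁻¹)} ∪
  {r | ∃ i, 1 ≤ i ∧ i ≤ n - 1 ∧ r = fρ n i * fρ n i}

/-- The virtual braid group on `n` strands. -/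
abbrev VB (n : ℕ) := PresentedGroup (vbRels n)

/-- The generator σ_i of `VB n`. -/
def vσ (n i : ℕ) : VB n := PresentedGroup.mk (vbRels n) (fσ n i)

/-- The generator ρ_i of `VB n`. -/
def vρ (n i : ℕ) : VB n := PresentedGroup.mk (vbRels n) (fρ n i)

/-- a_m = σ_1^m (ρ_1 σ_1 ρ_1 σ_1⁻¹) σ_1^{-m}. -/
def va (n : ℕ) (m : ℤ) : VB n :=
  (vσ n 1) ^ m * (vρ n 1 * vσ n 1 * vρ n 1 * (vσ n 1)⁻¹) * (vσ n 1) ^ (-m)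

/-- b_{m,ε} = σ_1^m (ρ_1^ε σ_2 ρ_1^ε σ_1⁻¹) σ_1^{-m}. -/
def vb (n : ℕ) (m : ℤ) (ε : ℕ) : VB n :=
  (vσ n 1) ^ m * ((vρ n 1) ^ ε * vσ n 2 * (vρ n 1) ^ ε * (vσ n 1)⁻¹) * (vσ n 1) ^ (-m)

/-- c_l = σ_l σ_1⁻¹. -/
def vc (n l : ℕ) : VB n := vσ n l * (vσ n 1)⁻¹

/-- f_{m,ε} = σ_1^m (ρ_1^ε ρ_2 ρ_1^{ε+1}) σ_1^{-m}; `f_m` is `vf n m 0`. -/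
def vf (n : ℕ) (m : ℤ) (ε : ℕ) : VB n :=
  (vσ n 1) ^ m * ((vρ n 1) ^ ε * vρ n 2 * (vρ n 1) ^ (ε + 1)) * (vσ n 1) ^ (-m)

/-- g_{m,l} = σ_1^m (ρ_l ρ_1) σ_1^{-m}. -/
def vg (n : ℕ) (m : ℤ) (l : ℕ) : VB n :=
  (vσ n 1) ^ m * (vρ n l * vρ n 1) * (vσ n 1) ^ (-m)

/-- The additional relators ρ_i σ_{i+1} σ_i (ρ_{i+1})⁻¹ σ_i⁻¹ σ_{i+1}⁻¹ of the
welded braid group. -/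
def wbExtraRels (n : ℕ) : Set (FreeGroup (VBGen n)) :=
  {r | ∃ i, 1 ≤ i ∧ i + 1 ≤ n - 1 ∧
      r = fρ n i * fσ n (i+1) * fσ n i * (fρ n (i+1))⁻¹ * (fσ n i)⁻¹ * (fσ n (i+1))⁻¹}

/-- The defining relators of the welded braid group `WB n`. -/
def wbRels (n : ℕ) : Set (FreeGroup (VBGen n)) := vbRels n ∪ wbExtraRels n

/-- The welded braid group on `n` strands. -/
abbrev WB (n : ℕ) := PresentedGroup (wbRels n)

/-- The generator σ_i of `WB n`. -/
def wσ (n i : ℕ) : WB n := PresentedGroup.mk (wbRels n) (fσ n i)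

/-- The generator ρ_i of `WB n`. -/
def wρ (n i : ℕ) : WB n := PresentedGroup.mk (wbRels n) (fρ n i)

/-- a_m in `WB n`. -/
def wa (n : ℕ) (m : ℤ) : WB n :=
  (wσ n 1) ^ m * (wρ n 1 * wσ n 1 * wρ n 1 * (wσ n 1)⁻¹) * (wσ n 1) ^ (-m)

/-- f_{m,ε} in `WB n`; `f_m` is `wf n m 0`. -/
def wf (n : ℕ) (m : ℤ) (ε : ℕ) : WB n :=
  (wσ n 1) ^ m * ((wρ n 1) ^ ε * wρ n 2 * (wρ n 1) ^ (ε + 1)) * (wσ n 1) ^ (-m)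

/-- c_l in `WB n`. -/
def wc (n l : ℕ) : WB n := wσ n l * (wσ n 1)⁻¹

/-- g_{m,l} in `WB n`. -/
def wg (n : ℕ) (m : ℤ) (l : ℕ) : WB n :=
  (wσ n 1) ^ m * (wρ n l * wρ n 1) * (wσ n 1) ^ (-m)

/-! ### Auxiliary development for Statement 10 -/

open scoped commutatorElement

section Helpers

variable {G : Type*} [Group G]

/-- If conjugation by `g` sends a generating set into the closure, it sends the
whole closure into itself. -/
theorem conj_mem_closure_of {S : Set G} {g : G}
    (hg : ∀ x ∈ S, g * x * g⁻¹ ∈ Subgroup.closure S) :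
    ∀ h ∈ Subgroup.closure S, g * h * g⁻¹ ∈ Subgroup.closure S := by
  intro h hh
  induction hh using Subgroup.closure_induction with
  | mem x hx => exact hg x hx
  | one => simpa using Subgroup.one_mem _
  | mul x y hx hy ihx ihy =>
      have e : g * (x * y) * g⁻¹ = (g * x * g⁻¹) * (g * y * g⁻¹) := by group
      rw [e]; exact Subgroup.mul_mem _ ihx ihy
  | inv x hx ihx =>
      have e : g * x⁻¹ * g⁻¹ = (g * x * g⁻¹)⁻¹ := by group
      rw [e]; exact Subgroup.inv_mem _ ihx

/-- A closure is normal as soon as conjugation by a set of group generators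
(and their inverses) preserves it. -/
theorem closure_normal_of_gens {T S : Set G} (hT : Subgroup.closure T = ⊤)
    (h1 : ∀ t ∈ T, ∀ h ∈ Subgroup.closure S, t * h * t⁻¹ ∈ Subgroup.closure S)
    (h2 : ∀ t ∈ T, ∀ h ∈ Subgroup.closure S, t⁻¹ * h * t ∈ Subgroup.closure S) :
    (Subgroup.closure S).Normal := by
  set H := Subgroup.closure S with hH
  let K : Subgroup G :=
    { carrier := {g | ∀ h ∈ H, g * h * g⁻¹ ∈ H ∧ g⁻¹ * h * g ∈ H}
      one_mem' := by
        intro h hh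
        refine ⟨by simpa using hh, by simpa using hh⟩
      mul_mem' := by
        intro a b ha hb
        intro h hh
        constructor
        · have e : a * b * h * (a * b)⁻¹ = a * (b * h * b⁻¹) * a⁻¹ := by group
          rw [e]; exact (ha _ (hb h hh).1).1
        · have e : (a * b)⁻¹ * h * (a * b) = b⁻¹ * (a⁻¹ * h * a) * b := by group
          rw [e]; exact (hb _ (ha h hh).2).2
      inv_mem' := by
        intro a ha h hh
        constructor
        · have e : a⁻¹ * h * (a⁻¹)⁻¹ = a⁻¹ * h * a := by group
          rw [e]; exact (ha h hh).2
        · have e : (a⁻¹)⁻¹ * h * a⁻¹ = a * h * a⁻¹ := by group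
          rw [e]; exact (ha h hh).1 }
  have hTK : T ⊆ (K : Set G) := by
    intro t ht
    show ∀ h ∈ H, t * h * t⁻¹ ∈ H ∧ t⁻¹ * h * t ∈ H
    exact fun h hh => ⟨h1 t ht h hh, h2 t ht h hh⟩
  have hK : ∀ g : G, g ∈ K := by
    intro g
    have : (⊤ : Subgroup G) ≤ K := by
      rw [← hT]; exact (Subgroup.closure_le K).2 hTK
    exact this (Subgroup.mem_top g)
  exact ⟨fun n hn g => (hK g n hn).1⟩

/-- If a normal subgroup contains the commutators of a set of generators, it
contains the whole commutator subgroup. -/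
theorem commutator_le_of_gens (H : Subgroup G) [hn : H.Normal] {T : Set G}
    (hT : Subgroup.closure T = ⊤)
    (hc : ∀ a ∈ T, ∀ b ∈ T, ⁅a, b⁆ ∈ H) : commutator G ≤ H := by
  rw [commutator_def, Subgroup.commutator_le]
  intro g₁ _ g₂ _
  set φ := QuotientGroup.mk' H with hφ
  have base : ∀ a ∈ T, ∀ b ∈ T, Commute (φ a) (φ b) := by
    intro a ha b hb
    refine commutatorElement_eq_one_iff_commute.mp ?_
    rw [← map_commutatorElement]
    exact (QuotientGroup.eq_one_iff _).mpr (hc a ha b hb)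
  have gen : ∀ z : G ⧸ H, z ∈ Subgroup.closure (φ '' T) := by
    intro z
    have : Subgroup.closure (φ '' T) = ⊤ := by
      rw [← MonoidHom.map_closure, hT]
      exact Subgroup.map_top_of_surjective φ (QuotientGroup.mk'_surjective H)
    rw [this]; exact Subgroup.mem_top z
  have main : ∀ u ∈ Subgroup.closure (φ '' T), ∀ v ∈ Subgroup.closure (φ '' T),
      Commute u v := by
    intro u hu v hv
    induction hu, hv using Subgroup.closure_induction₂ with
    | mem x y hx hy =>
        obtain ⟨a, ha, rfl⟩ := hx
        obtain ⟨b, hb, rfl⟩ := hy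
        exact base a ha b hb
    | one_left x hx => exact Commute.one_left x
    | one_right x hx => exact Commute.one_right x
    | mul_left x y z _ _ _ h1 h2 => exact h1.mul_left h2
    | mul_right y z x _ _ _ h1 h2 => exact h1.mul_right h2
    | inv_left x y _ _ h => exact h.inv_left
    | inv_right x y _ _ h => exact h.inv_right
  have : φ ⁅g₁, g₂⁆ = 1 := by
    rw [map_commutatorElement]
    exact commutatorElement_eq_one_iff_commute.mpr (main _ (gen _) _ (gen _))
  exact (QuotientGroup.eq_one_iff _).mp this

end Helpers

namespace WB3Proof

open Subgroup

/-- σ₁ in `WB 3`. -/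
def s : WB 3 := wσ 3 1
/-- σ₂ in `WB 3`. -/
def t : WB 3 := wσ 3 2
/-- ρ₁ in `WB 3`. -/
def p : WB 3 := wρ 3 1
/-- ρ₂ in `WB 3`. -/
def q : WB 3 := wρ 3 2
/-- c = ρ₂ρ₁. -/
def c : WB 3 := q * p
/-- A = ρ₁σ₁ρ₁σ₁⁻¹. -/
def A : WB 3 := p * s * p * s⁻¹
/-- f m -/
def f (m : ℤ) : WB 3 := s ^ m * c * s ^ (-m)
/-- a m -/
def a (m : ℤ) : WB 3 := s ^ m * A * s ^ (-m)

lemma c_def : c = q * p := rfl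
lemma A_def : A = p * s * p * s⁻¹ := rfl
lemma f_def (m : ℤ) : f m = s ^ m * c * s ^ (-m) := rfl
lemma a_def (m : ℤ) : a m = s ^ m * A * s ^ (-m) := rfl

lemma hwa (m : ℤ) : wa 3 m = a m := rfl

lemma hwf (m : ℤ) : wf 3 m 0 = f m := by
  show s ^ m * ((p) ^ (0:ℕ) * q * (p) ^ (0+1)) * s ^ (-m) = s ^ m * c * s ^ (-m)
  norm_num [c]

/-- relators die in the presented group -/
lemma relw {r : FreeGroup (VBGen 3)} (h : r ∈ wbRels 3) :
    PresentedGroup.mk (wbRels 3) r = 1 :=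
  (QuotientGroup.eq_one_iff _).mpr (Subgroup.subset_normalClosure h)

lemma hp2 : p * p = 1 := by
  have h : fρ 3 1 * fρ 3 1 ∈ wbRels 3 :=
    Or.inl (Or.inr ⟨1, le_rfl, by norm_num, rfl⟩)
  have h2 := relw h
  rw [map_mul] at h2
  exact h2

lemma hq2 : q * q = 1 := by
  have h : fρ 3 2 * fρ 3 2 ∈ wbRels 3 :=
    Or.inl (Or.inr ⟨2, by norm_num, by norm_num, rfl⟩)
  have h2 := relw h
  rw [map_mul] at h2
  exact h2

lemma hpi : p⁻¹ = p := inv_eq_of_mul_eq_one_right hp2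
lemma hqi : q⁻¹ = q := inv_eq_of_mul_eq_one_right hq2

lemma hbr : s * t * s = t * s * t := by
  have h : fσ 3 1 * fσ 3 2 * fσ 3 1 * (fσ 3 2)⁻¹ * (fσ 3 1)⁻¹ * (fσ 3 2)⁻¹ ∈ wbRels 3 :=
    Or.inl (Or.inl (Or.inr ⟨1, le_rfl, by norm_num, Or.inl (by norm_num)⟩))
  have h2 := relw h
  simp only [map_mul, map_inv] at h2
  have h3 : s * t * s * t⁻¹ * s⁻¹ * t⁻¹ = 1 := h2
  have h4 : (s * t * s) * (t * s * t)⁻¹ = 1 := by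
    calc (s * t * s) * (t * s * t)⁻¹ = s * t * s * t⁻¹ * s⁻¹ * t⁻¹ := by group
    _ = 1 := h3
  exact mul_inv_eq_one.mp h4

lemma hrr : p * q * p = q * p * q := by
  have h : fρ 3 1 * fρ 3 2 * fρ 3 1 * (fρ 3 2)⁻¹ * (fρ 3 1)⁻¹ * (fρ 3 2)⁻¹ ∈ wbRels 3 :=
    Or.inl (Or.inl (Or.inr ⟨1, le_rfl, by norm_num, Or.inr (Or.inl (by norm_num))⟩))
  have h2 := relw h
  simp only [map_mul, map_inv] at h2
  have h3 : p * q * p * q⁻¹ * p⁻¹ * q⁻¹ = 1 := h2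
  have h4 : (p * q * p) * (q * p * q)⁻¹ = 1 := by
    calc (p * q * p) * (q * p * q)⁻¹ = p * q * p * q⁻¹ * p⁻¹ * q⁻¹ := by group
    _ = 1 := h3
  exact mul_inv_eq_one.mp h4

lemma hmx : p * q * s = t * p * q := by
  have h : fρ 3 1 * fρ 3 2 * fσ 3 1 * (fρ 3 2)⁻¹ * (fρ 3 1)⁻¹ * (fσ 3 2)⁻¹ ∈ wbRels 3 :=
    Or.inl (Or.inl (Or.inr ⟨1, le_rfl, by norm_num, Or.inr (Or.inr (by norm_num))⟩))
  have h2 := relw h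
  simp only [map_mul, map_inv] at h2
  have h3 : p * q * s * q⁻¹ * p⁻¹ * t⁻¹ = 1 := h2
  have h4 : (p * q * s) * (t * p * q)⁻¹ = 1 := by
    calc (p * q * s) * (t * p * q)⁻¹ = p * q * s * q⁻¹ * p⁻¹ * t⁻¹ := by group
    _ = 1 := h3
  exact mul_inv_eq_one.mp h4

lemma hwd : p * t * s = t * s * q := by
  have h : fρ 3 1 * fσ 3 2 * fσ 3 1 * (fρ 3 2)⁻¹ * (fσ 3 1)⁻¹ * (fσ 3 2)⁻¹ ∈ wbRels 3 :=
    Or.inr ⟨1, le_rfl, by norm_num, by norm_num⟩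
  have h2 := relw h
  simp only [map_mul, map_inv] at h2
  have h3 : p * t * s * q⁻¹ * s⁻¹ * t⁻¹ = 1 := h2
  have h4 : (p * t * s) * (t * s * q)⁻¹ = 1 := by
    calc (p * t * s) * (t * s * q)⁻¹ = p * t * s * q⁻¹ * s⁻¹ * t⁻¹ := by group
    _ = 1 := h3
  exact mul_inv_eq_one.mp h4

/- basic consequences -/

lemma hccc : c * c * c = 1 := by
  calc c * c * c = q * (p * q * p) * (q * p) := by rw [c_def]; group
  _ = q * (q * p * q) * (q * p) := by rw [hrr]
  _ = (q * q) * p * (q * (q * p)) := by group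
  _ = 1 := by rw [hq2, one_mul, ← mul_assoc q q p, hq2, one_mul, hp2]

lemma hc2 : c * c = c⁻¹ :=
  eq_inv_of_mul_eq_one_left (show c * (c * c) = 1 by rw [← mul_assoc]; exact hccc)

lemma hc2' : c⁻¹ * c⁻¹ = c := by
  rw [← mul_inv_rev, hc2, inv_inv]

lemma hcinv : c⁻¹ = p * q := by
  rw [c_def, mul_inv_rev, hpi, hqi]

lemma hq_cp : q = c * p := by
  rw [c_def, mul_assoc, hp2, mul_one]

lemma ht : t = c⁻¹ * s * c := by
  have h : c⁻¹ * s * c = t := by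
    rw [hcinv, c_def]
    calc p * q * s * (q * p) = (t * p * q) * (q * p) := by rw [hmx]
    _ = t * (p * ((q * q) * p)) := by group
    _ = t := by rw [hq2, one_mul, hp2, mul_one]
  exact h.symm

/- movement rules -/

lemma hp2' : ∀ x : WB 3, p * (p * x) = x := fun x => by
  rw [← mul_assoc, hp2, one_mul]

lemma hq2' : ∀ x : WB 3, q * (q * x) = x := fun x => by
  rw [← mul_assoc, hq2, one_mul]

lemma hc2'' : ∀ x : WB 3, c⁻¹ * (c⁻¹ * x) = c * x := fun x => by
  rw [← mul_assoc, hc2']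

lemma hpc1' : ∀ x : WB 3, p * (c * x) = c⁻¹ * (p * x) := fun x => by
  rw [hcinv, c_def]; simp only [mul_assoc]

lemma hpc2' : ∀ x : WB 3, p * (c⁻¹ * x) = c * (p * x) := fun x => by
  rw [hcinv, c_def]; simp only [mul_assoc, hp2']

lemma hps : ∀ x : WB 3, p * (s * x) = A * (s * (p * x)) := fun x => by
  simp only [A_def, mul_assoc, inv_mul_cancel_left, hp2']

lemma hps0 : p * s = A * (s * p) := by
  have := hps 1
  simpa using this

lemma hpsi : ∀ x : WB 3, p * (s⁻¹ * x) = s⁻¹ * (A⁻¹ * (p * x)) := fun x => by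
  simp only [A_def, mul_inv_rev, inv_inv, hpi, mul_assoc, hp2', inv_mul_cancel_left]

/- shift lemmas -/

lemma hshift_f (m k : ℤ) : f (m + k) = s ^ m * f k * s ^ (-m) := by
  simp only [f_def]; group

lemma hshift_a (m k : ℤ) : a (m + k) = s ^ m * a k * s ^ (-m) := by
  simp only [a_def]; group

lemma cf (m : ℤ) : s * f m * s⁻¹ = f (m + 1) := by
  simp only [f_def]; group

lemma cf' (m : ℤ) : s⁻¹ * f m * s = f (m - 1) := by
  simp only [f_def]; group

lemma ca (m : ℤ) : s * a m * s⁻¹ = a (m + 1) := by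
  simp only [a_def]; group

lemma ca' (m : ℤ) : s⁻¹ * a m * s = a (m - 1) := by
  simp only [a_def]; group

/- explicit small values -/

lemma hf0 : f 0 = c := by simp [f_def]
lemma hf1 : f 1 = s * c * s⁻¹ := by rw [f_def]; group
lemma hf2 : f 2 = s * (s * c * s⁻¹) * s⁻¹ := by
  have h := cf 1
  norm_num at h
  rw [← h, hf1]
lemma hf3 : f 3 = s * (s * (s * c * s⁻¹) * s⁻¹) * s⁻¹ := by
  have h := cf 2
  norm_num at h
  rw [← h, hf2]
lemma ha0 : a 0 = A := by simp [a_def]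
lemma ha1 : a 1 = s * A * s⁻¹ := by rw [a_def]; group

/- the two key relations -/

lemma hbr2 : s * (c⁻¹ * s * c) * s = (c⁻¹ * s * c) * s * (c⁻¹ * s * c) := by
  rw [← ht]; exact hbr

lemma hwd2 : p * (c⁻¹ * s * c) * s = (c⁻¹ * s * c) * s * q := by
  rw [← ht]; exact hwd

lemma I5 : f 3 = f 2 * (f 1)⁻¹ * f 0 * (f 1)⁻¹ * f 2 := by
  have e1 : (f 1)⁻¹ * f 2 * s ^ (3:ℤ) = (f 0)⁻¹ * f 1 * (f 2)⁻¹ * f 3 * s ^ (3:ℤ) := by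
    calc (f 1)⁻¹ * f 2 * s ^ (3:ℤ) = s * (c⁻¹ * s * c) * s := by
          simp only [f_def]; group
    _ = (c⁻¹ * s * c) * s * (c⁻¹ * s * c) := hbr2
    _ = (f 0)⁻¹ * f 1 * (f 2)⁻¹ * f 3 * s ^ (3:ℤ) := by
          simp only [f_def]; group
  have e2 := mul_right_cancel e1
  have e3 : f 2 * (f 1)⁻¹ * f 0 * (f 1)⁻¹ * f 2
      = f 2 * (f 1)⁻¹ * f 0 * ((f 1)⁻¹ * f 2) := by group
  rw [e3, e2]
  group

lemma I6 : a 1 = f 1 * (a 0)⁻¹ * f 0 * f 1 * f 2 := by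
  have e4 : p * (c⁻¹ * s * c) * s = c * (A * (s * (c⁻¹ * (A * (s * p))))) := by
    simp only [mul_assoc]
    rw [hpc2', hps, hpc1', hps0]
  have e5 : c * (A * (s * (c⁻¹ * (A * (s * p))))) = (c⁻¹ * s * c) * s * q := by
    rw [← e4]; exact hwd2
  have e6 : f 0 * a 0 * (f 1)⁻¹ * a 1 * (s ^ (2:ℤ) * p)
      = (f 0)⁻¹ * f 1 * f 2 * (s ^ (2:ℤ) * p) := by
    calc f 0 * a 0 * (f 1)⁻¹ * a 1 * (s ^ (2:ℤ) * p)
        = c * (A * (s * (c⁻¹ * (A * (s * p))))) := by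
          simp only [f_def, a_def]; group
    _ = (c⁻¹ * s * c) * s * q := e5
    _ = (f 0)⁻¹ * f 1 * f 2 * (s ^ (2:ℤ) * p) := by
          rw [hq_cp]; simp only [f_def]; group
  have e7 := mul_right_cancel e6
  have e8 : f 1 * (a 0)⁻¹ * f 0 * f 1 * f 2
      = f 1 * (a 0)⁻¹ * (f 0 * f 0) * ((f 0)⁻¹ * f 1 * f 2) := by group
  rw [e8, ← e7, hf0]
  have e9 : f 1 * (a 0)⁻¹ * (c * c) * (c * a 0 * (f 1)⁻¹ * a 1)
      = f 1 * (a 0)⁻¹ * (c * c * c) * (a 0 * (f 1)⁻¹ * a 1) := by group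
  rw [e9, hccc]
  group

/- recurrences -/

lemma Rf (m : ℤ) : f (m + 3) = f (m + 2) * (f (m + 1))⁻¹ * f m * (f (m + 1))⁻¹ * f (m + 2) := by
  calc f (m + 3) = s ^ m * f 3 * s ^ (-m) := hshift_f m 3
  _ = s ^ m * (f 2 * (f 1)⁻¹ * f 0 * (f 1)⁻¹ * f 2) * s ^ (-m) := by rw [I5]
  _ = (s ^ m * f 2 * s ^ (-m)) * (s ^ m * f 1 * s ^ (-m))⁻¹ * (s ^ m * f 0 * s ^ (-m))
      * (s ^ m * f 1 * s ^ (-m))⁻¹ * (s ^ m * f 2 * s ^ (-m)) := by group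
  _ = f (m + 2) * (f (m + 1))⁻¹ * f (m + 0) * (f (m + 1))⁻¹ * f (m + 2) := by
      rw [← hshift_f m 2, ← hshift_f m 1, ← hshift_f m 0]
  _ = f (m + 2) * (f (m + 1))⁻¹ * f m * (f (m + 1))⁻¹ * f (m + 2) := by rw [add_zero]

lemma Rf' (m : ℤ) : f m = f (m + 1) * (f (m + 2))⁻¹ * f (m + 3) * (f (m + 2))⁻¹ * f (m + 1) := by
  rw [Rf m]; group

lemma Ra (m : ℤ) : a (m + 1) = f (m + 1) * (a m)⁻¹ * f m * f (m + 1) * f (m + 2) := by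
  calc a (m + 1) = s ^ m * a 1 * s ^ (-m) := hshift_a m 1
  _ = s ^ m * (f 1 * (a 0)⁻¹ * f 0 * f 1 * f 2) * s ^ (-m) := by rw [I6]
  _ = (s ^ m * f 1 * s ^ (-m)) * (s ^ m * a 0 * s ^ (-m))⁻¹ * (s ^ m * f 0 * s ^ (-m))
      * (s ^ m * f 1 * s ^ (-m)) * (s ^ m * f 2 * s ^ (-m)) := by group
  _ = f (m + 1) * (a (m + 0))⁻¹ * f (m + 0) * f (m + 1) * f (m + 2) := by
      rw [← hshift_f m 1, ← hshift_f m 0, ← hshift_f m 2, ← hshift_a m 0]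
  _ = f (m + 1) * (a m)⁻¹ * f m * f (m + 1) * f (m + 2) := by rw [add_zero]

lemma Ra' (m : ℤ) : a m = f m * f (m + 1) * f (m + 2) * (a (m + 1))⁻¹ * f (m + 1) := by
  rw [Ra m]; group


/-! ### The subgroup generated by the four elements -/

def SS : Set (WB 3) := {wa 3 0, wf 3 0 0, wf 3 1 0, wf 3 2 0}

local notation "H" => Subgroup.closure SS

lemma ha0H : a 0 ∈ H := by
  rw [← hwa]; exact Subgroup.subset_closure (by simp [SS])
lemma hf0H : f 0 ∈ H := by
  rw [← hwf]; exact Subgroup.subset_closure (by simp [SS])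
lemma hf1H : f 1 ∈ H := by
  rw [← hwf]; exact Subgroup.subset_closure (by simp [SS])
lemma hf2H : f 2 ∈ H := by
  rw [← hwf]; exact Subgroup.subset_closure (by simp [SS])
lemma hcH : c ∈ H := by rw [← hf0]; exact hf0H
lemma hAH : A ∈ H := by rw [← ha0]; exact ha0H

lemma hfH : ∀ m : ℤ, f m ∈ H := by
  have key : ∀ m : ℤ, f m ∈ H ∧ f (m + 1) ∈ H ∧ f (m + 2) ∈ H := by
    intro m
    induction m using Int.induction_on with
    | zero =>
        refine ⟨hf0H, ?_, ?_⟩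
        · rw [zero_add]; exact hf1H
        · rw [zero_add]; exact hf2H
    | succ k ih =>
        obtain ⟨h0, h1, h2⟩ := ih
        refine ⟨h1, ?_, ?_⟩
        · rw [show (k:ℤ) + 1 + 1 = k + 2 by ring]; exact h2
        · rw [show (k:ℤ) + 1 + 2 = k + 3 by ring, Rf k]
          exact mul_mem (mul_mem (mul_mem (mul_mem h2 (inv_mem h1)) h0) (inv_mem h1)) h2
    | pred k ih =>
        obtain ⟨h0, h1, h2⟩ := ih
        have e1 : (-k:ℤ) - 1 + 1 = -k := by ring
        have e2 : (-k:ℤ) - 1 + 2 = -k + 1 := by ring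
        have e3 : (-k:ℤ) - 1 + 3 = -k + 2 := by ring
        refine ⟨?_, ?_, ?_⟩
        · rw [Rf' (-k - 1), e1, e2, e3]
          exact mul_mem (mul_mem (mul_mem (mul_mem h0 (inv_mem h1)) h2) (inv_mem h1)) h0
        · rw [e1]; exact h0
        · rw [e2]; exact h1
  exact fun m => (key m).1

lemma haH : ∀ m : ℤ, a m ∈ H := by
  intro m
  induction m using Int.induction_on with
  | zero => exact ha0H
  | succ k ih =>
      rw [Ra k]
      exact mul_mem (mul_mem (mul_mem (mul_mem (hfH _) (inv_mem ih)) (hfH _)) (hfH _)) (hfH _)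
  | pred k ih =>
      have e1 : (-k:ℤ) - 1 + 1 = -k := by ring
      rw [Ra' (-k - 1), e1]
      exact mul_mem (mul_mem (mul_mem (mul_mem (hfH _) (hfH _)) (hfH _)) (inv_mem ih)) (hfH _)

/-! ### conjugation formulas -/

lemma hc2c : ∀ x : WB 3, c * (c * x) = c⁻¹ * x := fun x => by
  rw [← mul_assoc, hc2]

lemma Pa : p * a 0 * p⁻¹ = (a 0)⁻¹ := by
  rw [hpi, ha0, A_def]
  simp only [mul_inv_rev, inv_inv, hpi, mul_assoc, hp2']

lemma Pf0 : p * f 0 * p⁻¹ = (f 0)⁻¹ := by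
  rw [hpi, hf0, c_def]
  simp only [mul_inv_rev, hpi, hqi, mul_assoc, hp2, mul_one]

lemma Pf1 : p * f 1 * p⁻¹ = a 0 * ((f 1)⁻¹ * (a 0)⁻¹) := by
  rw [hpi, hf1, ha0]
  simp only [mul_assoc, mul_inv_rev, inv_inv]
  rw [hps, hpc1', hpsi]
  simp only [hp2, mul_one]

lemma Pf2 : p * f 2 * p⁻¹ = a 0 * (a 1 * ((f 2)⁻¹ * ((a 1)⁻¹ * (a 0)⁻¹))) := by
  rw [hpi, hf2, ha0, ha1]
  simp only [mul_assoc, mul_inv_rev, inv_inv]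
  rw [hps, hps, hpc1', hpsi, hpsi]
  simp only [hp2, mul_one]
  group

lemma Qc (x : WB 3) : q * x * q⁻¹ = c * (p * x * p⁻¹) * c⁻¹ := by
  rw [hqi, hpi, hcinv, hq_cp, c_def]
  simp only [mul_assoc, hp2']

/-! ### conjugation stability of H -/

lemma conjS : ∀ h ∈ H, s * h * s⁻¹ ∈ H := by
  apply conj_mem_closure_of
  intro x hx
  have hx' : x = wa 3 0 ∨ x = wf 3 0 0 ∨ x = wf 3 1 0 ∨ x = wf 3 2 0 := by
    simpa [SS] using hx
  rcases hx' with rfl | rfl | rfl | rfl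
  · rw [hwa, ca]; exact haH _
  · rw [hwf, cf]; exact hfH _
  · rw [hwf, cf]; exact hfH _
  · rw [hwf, cf]; exact hfH _

lemma conjSi : ∀ h ∈ H, s⁻¹ * h * s ∈ H := by
  have base : ∀ x ∈ SS, s⁻¹ * x * (s⁻¹)⁻¹ ∈ H := by
    intro x hx
    have hx' : x = wa 3 0 ∨ x = wf 3 0 0 ∨ x = wf 3 1 0 ∨ x = wf 3 2 0 := by
      simpa [SS] using hx
    rw [inv_inv]
    rcases hx' with rfl | rfl | rfl | rfl
    · rw [hwa, ca']; exact haH _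
    · rw [hwf, cf']; exact hfH _
    · rw [hwf, cf']; exact hfH _
    · rw [hwf, cf']; exact hfH _
  intro h hh
  have := conj_mem_closure_of base h hh
  rwa [inv_inv] at this

lemma conjP : ∀ h ∈ H, p * h * p⁻¹ ∈ H := by
  apply conj_mem_closure_of
  intro x hx
  have hx' : x = wa 3 0 ∨ x = wf 3 0 0 ∨ x = wf 3 1 0 ∨ x = wf 3 2 0 := by
    simpa [SS] using hx
  rcases hx' with rfl | rfl | rfl | rfl
  · rw [hwa, Pa]; exact inv_mem (haH 0)
  · rw [hwf, Pf0]; exact inv_mem (hfH 0)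
  · rw [hwf, Pf1]
    exact mul_mem (haH 0) (mul_mem (inv_mem (hfH 1)) (inv_mem (haH 0)))
  · rw [hwf, Pf2]
    exact mul_mem (haH 0) (mul_mem (haH 1)
      (mul_mem (inv_mem (hfH 2)) (mul_mem (inv_mem (haH 1)) (inv_mem (haH 0)))))

lemma conjPi : ∀ h ∈ H, p⁻¹ * h * p ∈ H := by
  intro h hh
  have h2 := conjP h hh
  rw [hpi] at h2 ⊢
  exact h2

lemma conjQ : ∀ h ∈ H, q * h * q⁻¹ ∈ H := by
  intro h hh
  rw [Qc]
  exact mul_mem (mul_mem hcH (conjP h hh)) (inv_mem hcH)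

lemma conjQi : ∀ h ∈ H, q⁻¹ * h * q ∈ H := by
  intro h hh
  have h2 := conjQ h hh
  rw [hqi] at h2 ⊢
  exact h2

lemma conjT : ∀ h ∈ H, t * h * t⁻¹ ∈ H := by
  intro h hh
  rw [ht]
  have e : (c⁻¹ * s * c) * h * (c⁻¹ * s * c)⁻¹ = c⁻¹ * (s * (c * h * c⁻¹) * s⁻¹) * c := by
    group
  rw [e]
  exact mul_mem (mul_mem (inv_mem hcH)
    (conjS _ (mul_mem (mul_mem hcH hh) (inv_mem hcH)))) hcH

lemma conjTi : ∀ h ∈ H, t⁻¹ * h * t ∈ H := by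
  intro h hh
  rw [ht]
  have e : (c⁻¹ * s * c)⁻¹ * h * (c⁻¹ * s * c) = c⁻¹ * (s⁻¹ * (c * h * c⁻¹) * s) * c := by
    group
  rw [e]
  exact mul_mem (mul_mem (inv_mem hcH)
    (conjSi _ (mul_mem (mul_mem hcH hh) (inv_mem hcH)))) hcH

/-! ### generators of WB 3 -/

lemma of_mem : ∀ x : VBGen 3,
    (PresentedGroup.of (rels := wbRels 3) x) ∈ ({s, t, p, q} : Set (WB 3)) := by
  rintro (⟨i, hi⟩ | ⟨i, hi⟩)
  · interval_cases i
    · exact Or.inl rfl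
    · exact Or.inr (Or.inl rfl)
  · interval_cases i
    · exact Or.inr (Or.inr (Or.inl rfl))
    · exact Or.inr (Or.inr (Or.inr rfl))

lemma top_gen : Subgroup.closure ({s, t, p, q} : Set (WB 3)) = ⊤ := by
  apply le_antisymm le_top
  calc (⊤ : Subgroup (WB 3))
      = Subgroup.closure (Set.range (PresentedGroup.of (rels := wbRels 3))) :=
        (PresentedGroup.closure_range_of _).symm
  _ ≤ Subgroup.closure {s, t, p, q} := by
        apply Subgroup.closure_mono
        rintro _ ⟨x, rfl⟩
        exact of_mem x

/-! ### commutators of generators -/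

lemma Cpq : ⁅p, q⁆ = f 0 := by
  rw [commutatorElement_def, hpi, hqi, hf0, ← hc2', hcinv]; group

lemma Cps : ⁅p, s⁆ = a 0 := by
  rw [commutatorElement_def, hpi, ha0, A_def]

lemma Cqs : ⁅q, s⁆ = f 0 * (a 0 * (f 1)⁻¹) := by
  rw [commutatorElement_def, hqi, hq_cp, hf0, ha0, hf1]
  simp only [mul_assoc, mul_inv_rev, inv_inv]
  rw [hps, hpc1', hp2']

lemma Cpt : ⁅p, t⁆ = f 0 * (a 0 * (f 1 * f 0)) := by
  rw [commutatorElement_def, hpi, ht, hf0, ha0, hf1]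
  simp only [mul_assoc, mul_inv_rev, inv_inv]
  rw [hpc2', hps, hpc1', hp2', hc2'']

lemma Cqt : ⁅q, t⁆ = (f 0)⁻¹ * (a 0 * f 0) := by
  rw [commutatorElement_def, hqi, ht, hq_cp, hf0, ha0]
  simp only [mul_assoc, mul_inv_rev, inv_inv]
  rw [hpc2', hps, hpc1', hpc1', hp2', hc2'']
  simp only [mul_inv_cancel_left]
  rw [hc2c]

lemma Cst : ⁅s, t⁆ = (f 1)⁻¹ * f 2 * (f 1)⁻¹ * f 0 := by
  rw [commutatorElement_def, ht, hf0, hf1, hf2]; group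

lemma Mdiag (x : WB 3) : ⁅x, x⁆ ∈ H := by
  rw [commutatorElement_self]; exact one_mem _

lemma revH {x y : WB 3} (h : ⁅x, y⁆ ∈ H) : ⁅y, x⁆ ∈ H := by
  rw [← commutatorElement_inv]; exact inv_mem h

lemma Mpq : ⁅p, q⁆ ∈ H := by rw [Cpq]; exact hfH 0
lemma Mps : ⁅p, s⁆ ∈ H := by rw [Cps]; exact haH 0
lemma Mqs : ⁅q, s⁆ ∈ H := by
  rw [Cqs]; exact mul_mem (hfH 0) (mul_mem (haH 0) (inv_mem (hfH 1)))
lemma Mpt : ⁅p, t⁆ ∈ H := by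
  rw [Cpt]; exact mul_mem (hfH 0) (mul_mem (haH 0) (mul_mem (hfH 1) (hfH 0)))
lemma Mqt : ⁅q, t⁆ ∈ H := by
  rw [Cqt]; exact mul_mem (inv_mem (hfH 0)) (mul_mem (haH 0) (hfH 0))
lemma Mst : ⁅s, t⁆ ∈ H := by
  rw [Cst]
  exact mul_mem (mul_mem (mul_mem (inv_mem (hfH 1)) (hfH 2)) (inv_mem (hfH 1))) (hfH 0)

/-! ### main theorem -/

lemma Hnormal : (Subgroup.closure SS).Normal := by
  apply closure_normal_of_gens (T := {s, t, p, q}) top_gen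
  · intro x hx
    simp only [Set.mem_insert_iff, Set.mem_singleton_iff] at hx
    rcases hx with rfl | rfl | rfl | rfl
    exacts [conjS, conjT, conjP, conjQ]
  · intro x hx
    simp only [Set.mem_insert_iff, Set.mem_singleton_iff] at hx
    rcases hx with rfl | rfl | rfl | rfl
    exacts [conjSi, conjTi, conjPi, conjQi]

lemma commutator_mem (g h : WB 3) : ⁅g, h⁆ ∈ commutator (WB 3) := by
  rw [_root_.commutator_def]
  exact Subgroup.commutator_mem_commutator (Subgroup.mem_top g) (Subgroup.mem_top h)

lemma main : commutator (WB 3) = Subgroup.closure SS := by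
  haveI := Hnormal
  apply le_antisymm
  · apply commutator_le_of_gens _ top_gen
    intro x hx y hy
    simp only [Set.mem_insert_iff, Set.mem_singleton_iff] at hx hy
    rcases hx with rfl | rfl | rfl | rfl <;> rcases hy with rfl | rfl | rfl | rfl
    exacts [Mdiag s, Mst, revH Mps, revH Mqs,
            revH Mst, Mdiag t, revH Mpt, revH Mqt,
            Mps, Mpt, Mdiag p, Mpq,
            Mqs, Mqt, revH Mpq, Mdiag q]
  · rw [Subgroup.closure_le]
    intro x hx
    have hx' : x = wa 3 0 ∨ x = wf 3 0 0 ∨ x = wf 3 1 0 ∨ x = wf 3 2 0 := by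
      simpa [SS] using hx
    have hf0comm : f 0 ∈ commutator (WB 3) := by
      have hqp : ⁅q, p⁆ = c * c := by
        rw [commutatorElement_def, hqi, hpi, c_def]; group
      have e : f 0 = ⁅q, p⁆ * ⁅q, p⁆ := by
        rw [hqp, hf0, show c * c * (c * c) = c * (c * c * c) from by group, hccc, mul_one]
      rw [e]
      exact mul_mem (commutator_mem q p) (commutator_mem q p)
    rcases hx' with rfl | rfl | rfl | rfl
    · rw [hwa, ← Cps]
      exact commutator_mem p s
    · rw [hwf]
      exact hf0comm
    · rw [hwf]
      have e : f 1 = s * f 0 * s⁻¹ := by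
        have h := cf 0; rw [zero_add] at h; exact h.symm
      rw [e]
      exact Subgroup.Normal.conj_mem inferInstance _ hf0comm s
    · rw [hwf]
      have e2 : f 2 = s * (s * f 0 * s⁻¹) * s⁻¹ := by
        have h0 := cf 0; rw [zero_add] at h0
        have h1 := cf 1; norm_num at h1
        rw [← h1, ← h0]
      rw [e2]
      have h1 : s * f 0 * s⁻¹ ∈ commutator (WB 3) :=
        Subgroup.Normal.conj_mem inferInstance _ hf0comm s
      exact Subgroup.Normal.conj_mem inferInstance _ h1 s

end WB3Proof


/-- `WB_3'` is the subgroup of `WB_3` generated by the four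
elements `a_0, f_0, f_1, f_2`. -/
theorem WB3_commutator_generators :
    commutator (WB 3) = Subgroup.closure {wa 3 0, wf 3 0 0, wf 3 1 0, wf 3 2 0} :=
  WB3Proof.main
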